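/- Let R be a commutative ℚ-algebra and let f(t) = Σ_{k≥0} a_k t^k be a formal power series over R with a_0 = 1 and a_1 = 0. Then there exists a unique formal power series b(t) = Σ_{k≥0} b_k t^k with Σ_{k≥0} f(t)^{2k+1} b_k t^k = 1 (the sum taken degreewise), and it satisfies b_0 = 1, b_1 = 0, b_2 = -a_2, and b_3 = -a_3. -/

import Mathlib

open PowerSeries

noncomputable def auxB {R : Type*} [CommRing R] (f : PowerSeries R) : ℕ → R
  | n => (if n = 0 then 1 else 0) - ∑ k ∈ (Finset.range n).attach,
      coeff (R := R) (n - k.1) (f ^ (2 * k.1 + 1)) * auxB f k.1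
decreasing_by exact Finset.mem_range.mp k.2

lemma auxB_eq {R : Type*} [CommRing R] (f : PowerSeries R) (n : ℕ) :
    auxB f n = (if n = 0 then 1 else 0) -
      ∑ k ∈ Finset.range n, coeff (R := R) (n - k) (f ^ (2 * k + 1)) * auxB f k := by
  rw [auxB, ← Finset.sum_attach (Finset.range n)
    (fun k => coeff (R := R) (n - k) (f ^ (2 * k + 1)) * auxB f k)]

lemma coeff_term {R : Type*} [CommRing R] (f : PowerSeries R) (n k : ℕ) (hk : k ≤ n) (c : R) :
    coeff (R := R) n (f ^ (2 * k + 1) * PowerSeries.C (R := R) c * X ^ k) =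
      coeff (R := R) (n - k) (f ^ (2 * k + 1)) * c := by
  rw [coeff_mul_X_pow', if_pos hk, coeff_mul_C]

lemma sum_reform {R : Type*} [CommRing R] (f b : PowerSeries R) (n : ℕ) :
    (∑ k ∈ Finset.range (n + 1),
        coeff (R := R) n (f ^ (2 * k + 1) * PowerSeries.C (R := R) (coeff (R := R) k b) * X ^ k)) =
      ∑ k ∈ Finset.range (n + 1), coeff (R := R) (n - k) (f ^ (2 * k + 1)) * coeff (R := R) k b := by
  refine Finset.sum_congr rfl fun k hk => ?_
  exact coeff_term f n k (Nat.lt_succ_iff.mp (Finset.mem_range.mp hk)) _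

theorem inverse_series_exists_unique (R : Type*) [CommRing R] [Algebra ℚ R]
    (f : PowerSeries R) (h0 : coeff (R := R) 0 f = 1) (h1 : coeff (R := R) 1 f = 0) :
    (∃! b : PowerSeries R, ∀ n : ℕ,
        (∑ k ∈ Finset.range (n + 1),
          coeff (R := R) n (f ^ (2 * k + 1) * PowerSeries.C (R := R) (coeff (R := R) k b) * X ^ k)) =
        if n = 0 then 1 else 0) ∧
    (∀ b : PowerSeries R,
      (∀ n : ℕ,
        (∑ k ∈ Finset.range (n + 1),
          coeff (R := R) n (f ^ (2 * k + 1) * PowerSeries.C (R := R) (coeff (R := R) k b) * X ^ k)) =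
        if n = 0 then 1 else 0) →
      coeff (R := R) 0 b = 1 ∧ coeff (R := R) 1 b = 0 ∧
        coeff (R := R) 2 b = -coeff (R := R) 2 f ∧ coeff (R := R) 3 b = -coeff (R := R) 3 f) := by
  have hc0 : constantCoeff (R := R) f = 1 := by rwa [← coeff_zero_eq_constantCoeff]
  have hpow0 : ∀ m : ℕ, coeff (R := R) 0 (f ^ m) = 1 := by
    intro m
    rw [coeff_zero_eq_constantCoeff, map_pow, hc0, one_pow]
  have hpow1 : ∀ m : ℕ, coeff (R := R) 1 (f ^ m) = 0 := by
    intro m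
    induction m with
    | zero => simp [coeff_one]
    | succ m ih =>
      rw [pow_succ, coeff_mul]
      simp [Finset.Nat.antidiagonal_succ, ih, h1]
  -- reformulated condition
  have key : ∀ b : PowerSeries R,
      (∀ n : ℕ,
        (∑ k ∈ Finset.range (n + 1),
          coeff (R := R) n (f ^ (2 * k + 1) * PowerSeries.C (R := R) (coeff (R := R) k b) * X ^ k)) =
        if n = 0 then 1 else 0) ↔
      (∀ n : ℕ,
        (∑ k ∈ Finset.range (n + 1),
          coeff (R := R) (n - k) (f ^ (2 * k + 1)) * coeff (R := R) k b) =
        if n = 0 then 1 else 0) := by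
    intro b
    constructor <;> intro h n <;> rw [← h n] <;> [skip; skip] <;>
      simp [sum_reform]
  have hex : ∀ n : ℕ,
      (∑ k ∈ Finset.range (n + 1),
        coeff (R := R) (n - k) (f ^ (2 * k + 1)) * coeff (R := R) k (PowerSeries.mk (auxB f))) =
      if n = 0 then 1 else 0 := by
    intro n
    rw [Finset.sum_range_succ]
    simp only [coeff_mk, Nat.sub_self, hpow0, one_mul]
    rw [auxB_eq f n]
    ring
  have huniq : ∀ b b' : PowerSeries R,
      (∀ n : ℕ,
        (∑ k ∈ Finset.range (n + 1),
          coeff (R := R) (n - k) (f ^ (2 * k + 1)) * coeff (R := R) k b) = if n = 0 then 1 else 0) →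
      (∀ n : ℕ,
        (∑ k ∈ Finset.range (n + 1),
          coeff (R := R) (n - k) (f ^ (2 * k + 1)) * coeff (R := R) k b') = if n = 0 then 1 else 0) →
      b = b' := by
    intro b b' hb hb'
    ext n
    induction n using Nat.strong_induction_on with
    | _ n ih =>
      have := (hb n).trans (hb' n).symm
      rw [Finset.sum_range_succ, Finset.sum_range_succ] at this
      simp only [Nat.sub_self, hpow0, one_mul] at this
      have hsum : (∑ k ∈ Finset.range n, coeff (R := R) (n - k) (f ^ (2 * k + 1)) * coeff (R := R) k b) =
          ∑ k ∈ Finset.range n, coeff (R := R) (n - k) (f ^ (2 * k + 1)) * coeff (R := R) k b' :=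
        Finset.sum_congr rfl fun k hk => by rw [ih k (Finset.mem_range.mp hk)]
      rw [hsum] at this
      exact add_left_cancel this
  constructor
  · refine ⟨PowerSeries.mk (auxB f), (key _).mpr hex, fun b hb => huniq b _ ((key b).mp hb) hex⟩
  · intro b hb
    replace hb := (key b).mp hb
    have e0 := hb 0
    simp [Finset.sum_range_succ, hc0] at e0
    have b0 : coeff (R := R) 0 b = 1 := by rw [coeff_zero_eq_constantCoeff]; exact e0
    have e1 := hb 1
    simp [Finset.sum_range_succ, h1, hpow0] at e1
    have b1 : coeff (R := R) 1 b = 0 := e1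
    have e2 := hb 2
    simp [Finset.sum_range_succ, b0, b1, hpow0, hpow1] at e2
    have b2 : coeff (R := R) 2 b = -coeff (R := R) 2 f := by linear_combination e2
    have e3 := hb 3
    simp [Finset.sum_range_succ, b0, b1, b2, hpow0, hpow1] at e3
    exact ⟨b0, b1, b2, by linear_combination e3⟩
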